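/- arXiv:1611.07184 — 2 statements merged into one kernel-verified Lean document; each statement's English description precedes it below -/
import Mathlib

section
/- The group with presentation ⟨x, y, z | x z y⁻¹ x = 1, x⁻¹ y z = 1, x y = 1⟩ is cyclic of order 5. -/
/-- The group ⟨x, y, z | x z y⁻¹ x = 1, x⁻¹ y z = 1, x y = 1⟩ is cyclic of order 5. -/
theorem stmt_5 :
    let x : FreeGroup (Fin 3) := FreeGroup.of 0
    let y : FreeGroup (Fin 3) := FreeGroup.of 1
    let z : FreeGroup (Fin 3) := FreeGroup.of 2
    let rels : Set (FreeGroup (Fin 3)) := {x * z * y⁻¹ * x, x⁻¹ * y * z, x * y}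
    IsCyclic (PresentedGroup rels) ∧ Nat.card (PresentedGroup rels) = 5 := by
  intro x y z rels
  -- generators in the presented group
  set G := PresentedGroup rels with hG
  let a : G := PresentedGroup.of 0
  let b : G := PresentedGroup.of 1
  let c : G := PresentedGroup.of 2
  -- relations hold in G
  have hrel : ∀ r ∈ rels, PresentedGroup.mk rels r = 1 := by
    intro r hr
    have : r ∈ Subgroup.normalClosure rels := Subgroup.subset_normalClosure hr
    exact (QuotientGroup.eq_one_iff r).mpr this
  have h1 : a * c * b⁻¹ * a = 1 := by
    have := hrel (x * z * y⁻¹ * x) (by left; rfl)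
    simpa [a, b, c, PresentedGroup.of, map_mul, map_inv] using this
  have h2 : a⁻¹ * b * c = 1 := by
    have := hrel (x⁻¹ * y * z) (by right; left; rfl)
    simpa [a, b, c, PresentedGroup.of, map_mul, map_inv] using this
  have h3 : a * b = 1 := by
    have := hrel (x * y) (by right; right; rfl)
    simpa [a, b, PresentedGroup.of, map_mul] using this
  have hb : b = a⁻¹ := (inv_eq_of_mul_eq_one_right h3).symm
  have hc : c = a * a := by
    have h2' : a⁻¹ * a⁻¹ * c = 1 := by rw [hb] at h2; exact h2
    calc c = (a * a) * ((a⁻¹ * a⁻¹) * c) := by group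
    _ = a * a := by rw [h2', mul_one]
  have ha5 : a ^ 5 = 1 := by
    have h := h1
    rw [hc, hb] at h
    group at h ⊢
    exact h
  -- every element is a power of a
  have hgen : ∀ g : G, g ∈ Subgroup.zpowers a := by
    intro g
    apply PresentedGroup.generated_by rels (Subgroup.zpowers a)
    intro j
    fin_cases j
    · exact Subgroup.mem_zpowers a
    · show b ∈ _
      rw [hb]; exact Subgroup.inv_mem _ (Subgroup.mem_zpowers a)
    · show c ∈ _
      rw [hc]; exact Subgroup.mul_mem _ (Subgroup.mem_zpowers a) (Subgroup.mem_zpowers a)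
  have htop : Subgroup.zpowers a = ⊤ := by
    rw [Subgroup.eq_top_iff']; exact hgen
  refine ⟨⟨a, hgen⟩, ?_⟩
  -- homomorphism to Z/5
  have hmap : ∀ r ∈ rels, FreeGroup.lift
      (fun i : Fin 3 => (Multiplicative.ofAdd (![1, 4, 2] i : ZMod 5))) r = 1 := by
    intro r hr
    rcases hr with h | h | h <;> subst h <;>
      simp [x, y, z, map_mul, map_inv, ← ofAdd_add, ← ofAdd_neg] <;> decide
  let f : G →* Multiplicative (ZMod 5) := PresentedGroup.toGroup hmap
  have hfa : f a = Multiplicative.ofAdd (1 : ZMod 5) :=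
    PresentedGroup.toGroup.of hmap (x := (0 : Fin 3))
  have hfsurj : Function.Surjective f := by
    intro m
    refine ⟨a ^ (m.toAdd).val, ?_⟩
    rw [map_pow, hfa, ← ofAdd_nsmul]
    simp [nsmul_eq_mul, ZMod.natCast_val, ZMod.cast_id]
  have hdvd1 : Nat.card G ∣ 5 := by
    have hcard : Nat.card G = orderOf a := by
      rw [← Nat.card_zpowers a, htop, Subgroup.card_top]
    rw [hcard]
    exact orderOf_dvd_of_pow_eq_one ha5
  have hdvd2 : 5 ∣ Nat.card G := by
    have := Subgroup.card_dvd_of_surjective f hfsurj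
    simpa [Nat.card_eq_fintype_card] using this
  exact Nat.dvd_antisymm hdvd1 hdvd2
end

section
/- Let ζ = e^{2πi/3} and τ₁ = (1−ζ)/3. In ℂ², the subgroup generated by the three lattices L₁ = ⟨(1,1), (ζ,ζ), (τ₁,τ₁)⟩, L₂ = ⟨(1,ζ), (ζ,ζ²), (τ₁, τ₁+ζ)⟩, and L₃ = ⟨(1,ζ²), (ζ,1), (τ₁, τ₁−1)⟩ equals the lattice Λ = ⟨(1,0), (ζ,0), (0,1), (0,ζ), (τ₁,τ₁)⟩. -/
open Complex in
/-- With ζ = e^{2πi/3} and τ₁ = (1−ζ)/3, the subgroup of ℂ² generated by the three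
lattices ⟨(1,1), (ζ,ζ), (τ₁,τ₁)⟩, ⟨(1,ζ), (ζ,ζ²), (τ₁,τ₁+ζ)⟩, ⟨(1,ζ²), (ζ,1), (τ₁,τ₁−1)⟩
equals the lattice ⟨(1,0), (ζ,0), (0,1), (0,ζ), (τ₁,τ₁)⟩. -/
theorem stmt_10 :
    let ζ : ℂ := Complex.exp (2 * Real.pi * Complex.I / 3)
    let τ₁ : ℂ := (1 - ζ) / 3
    AddSubgroup.closure ({(1, 1), (ζ, ζ), (τ₁, τ₁),
        (1, ζ), (ζ, ζ ^ 2), (τ₁, τ₁ + ζ),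
        (1, ζ ^ 2), (ζ, 1), (τ₁, τ₁ - 1)} : Set (ℂ × ℂ)) =
      AddSubgroup.closure ({(1, 0), (ζ, 0), (0, 1), (0, ζ), (τ₁, τ₁)} : Set (ℂ × ℂ)) := by
  intro ζ τ₁
  have hζ3 : ζ ^ 3 = 1 := by
    show Complex.exp (2 * Real.pi * Complex.I / 3) ^ 3 = 1
    rw [← Complex.exp_nat_mul]
    have h : ((3 : ℕ) : ℂ) * (2 * Real.pi * Complex.I / 3) = 2 * Real.pi * Complex.I := by
      push_cast; ring
    rw [h]
    simpa [mul_comm] using Complex.exp_two_pi_mul_I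
  have hζ1 : ζ ≠ 1 := by
    intro h
    obtain ⟨n, hn⟩ := Complex.exp_eq_one_iff.mp h
    have h2 : (2 : ℂ) * Real.pi * Complex.I ≠ 0 := by
      have hπ : (Real.pi : ℂ) ≠ 0 := by exact_mod_cast Real.pi_ne_zero
      simp [hπ, Complex.I_ne_zero]
    have key : (2 * Real.pi * Complex.I : ℂ) * 1 = (2 * Real.pi * Complex.I) * (3 * n) := by
      linear_combination (3 : ℂ) * hn
    have h1 : (1 : ℂ) = 3 * n := mul_left_cancel₀ h2 key
    have h1' : (1 : ℤ) = 3 * n := by exact_mod_cast h1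
    omega
  have hζ2 : ζ ^ 2 = -1 - ζ := by
    have h : (ζ - 1) * (ζ ^ 2 + ζ + 1) = 0 := by linear_combination hζ3
    rcases mul_eq_zero.mp h with h | h
    · exact absurd (sub_eq_zero.mp h) hζ1
    · linear_combination h
  apply le_antisymm <;> rw [AddSubgroup.closure_le] <;>
    intro x hx <;> simp only [Set.mem_insert_iff, Set.mem_singleton_iff] at hx
  · have ha : ((1:ℂ), (0:ℂ)) ∈ AddSubgroup.closure ({(1, 0), (ζ, 0), (0, 1), (0, ζ), (τ₁, τ₁)} : Set (ℂ × ℂ)) := AddSubgroup.subset_closure (by simp)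
    have hb : ((ζ:ℂ), (0:ℂ)) ∈ AddSubgroup.closure ({(1, 0), (ζ, 0), (0, 1), (0, ζ), (τ₁, τ₁)} : Set (ℂ × ℂ)) := AddSubgroup.subset_closure (by simp)
    have hc : ((0:ℂ), (1:ℂ)) ∈ AddSubgroup.closure ({(1, 0), (ζ, 0), (0, 1), (0, ζ), (τ₁, τ₁)} : Set (ℂ × ℂ)) := AddSubgroup.subset_closure (by simp)
    have hd : ((0:ℂ), (ζ:ℂ)) ∈ AddSubgroup.closure ({(1, 0), (ζ, 0), (0, 1), (0, ζ), (τ₁, τ₁)} : Set (ℂ × ℂ)) := AddSubgroup.subset_closure (by simp)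
    have he : ((τ₁:ℂ), (τ₁:ℂ)) ∈ AddSubgroup.closure ({(1, 0), (ζ, 0), (0, 1), (0, ζ), (τ₁, τ₁)} : Set (ℂ × ℂ)) := AddSubgroup.subset_closure (by simp)
    rcases hx with h | h | h | h | h | h | h | h | h <;> subst h
    · rw [show ((1:ℂ),(1:ℂ)) = (1,0)+(0,1) by simp]
      exact AddSubgroup.add_mem _ ha hc
    · rw [show ((ζ:ℂ),(ζ:ℂ)) = (ζ,0)+(0,ζ) by simp]
      exact AddSubgroup.add_mem _ hb hd
    · exact he
    · rw [show ((1:ℂ),(ζ:ℂ)) = (1,0)+(0,ζ) by simp]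
      exact AddSubgroup.add_mem _ ha hd
    · rw [show ((ζ:ℂ),ζ^2) = (ζ,0)-(0,1)-(0,ζ) from by
        simp only [Prod.mk_sub_mk, Prod.mk.injEq]
        constructor
        · ring
        · linear_combination hζ2]
      exact AddSubgroup.sub_mem _ (AddSubgroup.sub_mem _ hb hc) hd
    · rw [show ((τ₁:ℂ),τ₁+ζ) = (τ₁,τ₁)+(0,ζ) by simp]
      exact AddSubgroup.add_mem _ he hd
    · rw [show ((1:ℂ),ζ^2) = (1,0)-(0,1)-(0,ζ) from by
        simp only [Prod.mk_sub_mk, Prod.mk.injEq]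
        constructor
        · ring
        · linear_combination hζ2]
      exact AddSubgroup.sub_mem _ (AddSubgroup.sub_mem _ ha hc) hd
    · rw [show ((ζ:ℂ),(1:ℂ)) = (ζ,0)+(0,1) by simp]
      exact AddSubgroup.add_mem _ hb hc
    · rw [show ((τ₁:ℂ),τ₁-1) = (τ₁,τ₁)-(0,1) by simp]
      exact AddSubgroup.sub_mem _ he hc
  · set L : Set (ℂ × ℂ) := {(1, 1), (ζ, ζ), (τ₁, τ₁), (1, ζ), (ζ, ζ ^ 2), (τ₁, τ₁ + ζ), (1, ζ ^ 2), (ζ, 1), (τ₁, τ₁ - 1)} with hL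
    have h1 : ((1:ℂ),(1:ℂ)) ∈ AddSubgroup.closure L := AddSubgroup.subset_closure (by simp [hL])
    have h2 : ((ζ:ℂ),(ζ:ℂ)) ∈ AddSubgroup.closure L := AddSubgroup.subset_closure (by simp [hL])
    have h3' : ((τ₁:ℂ),(τ₁:ℂ)) ∈ AddSubgroup.closure L := AddSubgroup.subset_closure (by simp [hL])
    have h4 : ((τ₁:ℂ),τ₁+ζ) ∈ AddSubgroup.closure L := AddSubgroup.subset_closure (by simp [hL])
    have h5 : ((τ₁:ℂ),τ₁-1) ∈ AddSubgroup.closure L := AddSubgroup.subset_closure (by simp [hL])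
    have hc : ((0:ℂ),(1:ℂ)) ∈ AddSubgroup.closure L := by
      rw [show ((0:ℂ),(1:ℂ)) = (τ₁,τ₁) - (τ₁,τ₁-1) by simp]
      exact AddSubgroup.sub_mem _ h3' h5
    have hd : ((0:ℂ),(ζ:ℂ)) ∈ AddSubgroup.closure L := by
      rw [show ((0:ℂ),(ζ:ℂ)) = (τ₁,τ₁+ζ) - (τ₁,τ₁) by simp]
      exact AddSubgroup.sub_mem _ h4 h3'
    rcases hx with h | h | h | h | h <;> subst h
    · rw [show ((1:ℂ),(0:ℂ)) = (1,1) - (0,1) by simp [Prod.ext_iff]]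
      exact AddSubgroup.sub_mem _ h1 hc
    · rw [show ((ζ:ℂ),(0:ℂ)) = (ζ,ζ) - (0,ζ) by simp [Prod.ext_iff]]
      exact AddSubgroup.sub_mem _ h2 hd
    · exact hc
    · exact hd
    · exact h3'
end
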